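/- There exists a family D of tall summable ideals with |D| = 𝔡 (the dominating number) such that an ultrafilter U on ℕ is rapid if and only if U has nonempty intersection with every ideal in D. -/

import Mathlib

open Set Filter

/-- The summable ideal determined by `g`. -/
def Ig (g : ℕ → ℝ) : Set (Set ℕ) := {A | Summable (A.indicator g)}

/-- `g` determines a tall summable ideal: positive, divergent series, tends to `0`. -/
def SummableTall (g : ℕ → ℝ) : Prop :=
  (∀ n, 0 < g n) ∧ ¬ Summable g ∧ Tendsto g atTop (nhds 0)

/-- `U` is rapid: the enumeration functions of its members form a dominating family. -/
def Rapid (U : Ultrafilter ℕ) : Prop :=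
  ∀ f : ℕ → ℕ, ∃ A ∈ U, A.Infinite ∧ ∀ᶠ n in atTop, f n ≤ Nat.nth (· ∈ A) n

/-- The dominating number 𝔡. -/
noncomputable def domNum : Cardinal :=
  sInf {c | ∃ F : Set (ℕ → ℕ), Cardinal.mk ↥F = c ∧
    ∀ g : ℕ → ℕ, ∃ f ∈ F, ∀ᶠ n in atTop, g n ≤ f n}

namespace AtmostD

lemma not_summable_harmonic1 : ¬ Summable (fun m : ℕ => 1 / ((m:ℝ) + 1)) := by
  intro hs
  apply Real.not_summable_one_div_natCast
  apply (summable_nat_add_iff (f := fun n : ℕ => 1 / (n:ℝ)) 1).mp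
  convert hs using 2 with n
  · rfl
  · push_cast
    ring

def fhat (f : ℕ → ℕ) : ℕ → ℕ := fun k => (∑ i ∈ Finset.range (k+1), f i) + k + 1

lemma fhat_mono (f : ℕ → ℕ) : Monotone (fhat f) := by
  apply monotone_nat_of_le_succ
  intro k
  unfold fhat
  have : (∑ i ∈ Finset.range (k+1), f i) ≤ ∑ i ∈ Finset.range (k+1+1), f i :=
    Finset.sum_le_sum_of_subset (Finset.range_subset_range.mpr (by omega))
  omega

lemma le_fhat (f : ℕ → ℕ) (k : ℕ) : f k ≤ fhat f k := by
  have : f k ≤ ∑ i ∈ Finset.range (k+1), f i :=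
    Finset.single_le_sum (fun i _ => Nat.zero_le _) (Finset.self_mem_range_succ k)
  unfold fhat; omega

lemma lt_fhat (f : ℕ → ℕ) (k : ℕ) : k < fhat f k := by unfold fhat; omega

def cnt (f : ℕ → ℕ) (m : ℕ) : ℕ :=
  ((Finset.range (m+1)).filter (fun k => fhat f k ≤ m)).card

lemma cnt_mono (f : ℕ → ℕ) : Monotone (cnt f) := by
  intro m m' h
  apply Finset.card_le_card
  intro k hk
  simp only [Finset.mem_filter, Finset.mem_range] at *
  omega

lemma cnt_le_of_lt (f : ℕ → ℕ) {m j : ℕ} (h : m < fhat f j) : cnt f m ≤ j := by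
  have : ((Finset.range (m+1)).filter (fun k => fhat f k ≤ m)) ⊆ Finset.range j := by
    intro k hk
    simp only [Finset.mem_filter, Finset.mem_range] at *
    by_contra hc
    have : fhat f j ≤ fhat f k := fhat_mono f (by omega)
    omega
  simpa [cnt] using (Finset.card_le_card this).trans_eq (Finset.card_range j)

lemma lt_cnt (f : ℕ → ℕ) {m j : ℕ} (h : fhat f j ≤ m) : j < cnt f m := by
  have hsub : Finset.range (j+1) ⊆ (Finset.range (m+1)).filter (fun k => fhat f k ≤ m) := by
    intro i hi
    simp only [Finset.mem_range] at hi
    have h1 : fhat f i ≤ m := le_trans (fhat_mono f (by omega)) h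
    have h2 : i < fhat f i := lt_fhat f i
    simp only [Finset.mem_filter, Finset.mem_range]
    omega
  have := Finset.card_le_card hsub
  simpa [cnt, Finset.card_range] using this

lemma cnt_le_self (f : ℕ → ℕ) (m : ℕ) : cnt f m ≤ m := by
  have : ((Finset.range (m+1)).filter (fun k => fhat f k ≤ m)) ⊆ Finset.range m := by
    intro k hk
    simp only [Finset.mem_filter, Finset.mem_range] at *
    have := lt_fhat f k
    omega
  simpa [cnt] using (Finset.card_le_card this).trans_eq (Finset.card_range m)

noncomputable def gOf (f : ℕ → ℕ) : ℕ → ℝ := fun m => 1 / ((cnt f m : ℝ) + 1)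

lemma gOf_pos (f : ℕ → ℕ) (m : ℕ) : 0 < gOf f m := by
  unfold gOf; positivity

lemma gOf_tall (f : ℕ → ℕ) : SummableTall (gOf f) := by
  refine ⟨gOf_pos f, ?_, ?_⟩
  · intro hs
    apply not_summable_harmonic1
    apply Summable.of_nonneg_of_le (fun m => by positivity) (fun m => ?_) hs
    unfold gOf
    apply one_div_le_one_div_of_le (by positivity)
    have := cnt_le_self f m
    have h2 : ((cnt f m : ℝ)) ≤ (m : ℝ) := Nat.cast_le.mpr this
    linarith
  · have hc : Tendsto (cnt f) atTop atTop := by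
      apply tendsto_atTop_atTop.mpr
      intro K
      exact ⟨fhat f K, fun m hm => (lt_cnt f hm).le⟩
    exact tendsto_one_div_add_atTop_nhds_zero_nat.comp hc


lemma summable_indicator_range_iff (g : ℕ → ℝ) (m : ℕ → ℕ) (hm : Function.Injective m) :
    Summable ((Set.range m).indicator g) ↔ Summable (fun k => g (m k)) := by
  rw [← Function.Injective.summable_iff (f := (Set.range m).indicator g) hm
      (fun x hx => Set.indicator_of_notMem hx g)]
  apply summable_congr
  intro k
  exact Set.indicator_of_mem (Set.mem_range_self k) g

lemma setOf_mem (A : Set ℕ) : {n | n ∈ A} = A := rfl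

lemma range_nth (A : Set ℕ) (hA : A.Infinite) : Set.range (Nat.nth (· ∈ A)) = A :=
  Nat.range_nth_of_infinite hA

lemma summable_indicator_iff_nth (g : ℕ → ℝ) (A : Set ℕ) (hA : A.Infinite) :
    Summable (A.indicator g) ↔ Summable (fun k => g (Nat.nth (· ∈ A) k)) := by
  have := summable_indicator_range_iff g (Nat.nth (· ∈ A)) (Nat.nth_injective hA)
  rwa [range_nth A hA] at this

lemma mem_ultrafilter_infinite (U : Ultrafilter ℕ) (hU : (↑U : Filter ℕ) ≤ cofinite)
    {A : Set ℕ} (hA : A ∈ U) : A.Infinite := by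
  intro hfin
  have h1 : Aᶜ ∈ U := hU (by rw [mem_cofinite, compl_compl]; exact hfin)
  have h2 : A ∩ Aᶜ ∈ U := Filter.inter_mem hA h1
  simp at h2

lemma key (f : ℕ → ℕ) (A : Set ℕ) (hA : A.Infinite)
    (hs : Summable (A.indicator (gOf f))) :
    ∃ N, ∀ k, fhat f k ≤ Nat.nth (· ∈ A) (k + N) := by
  set a : ℕ → ℕ := Nat.nth (· ∈ A) with ha
  have hG : Summable (fun i => gOf f (a i)) := (summable_indicator_iff_nth _ A hA).mp hs
  set S : ℕ → ℝ := fun n => ∑ i ∈ Finset.range n, gOf f (a i) with hS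
  have hcauchy : CauchySeq S := (hG.hasSum.tendsto_sum_nat).cauchySeq
  obtain ⟨N, hN⟩ := Metric.cauchySeq_iff'.mp hcauchy 1 one_pos
  refine ⟨N, fun k => ?_⟩
  -- main estimate at n := k + N
  set n := k + N with hn
  have hNn : N ≤ n + 1 := by omega
  have hsum : ∑ i ∈ Finset.Ico N (n+1), gOf f (a i) < 1 := by
    have h1 := hN (n+1) (by omega)
    rw [Finset.sum_Ico_eq_sub _ hNn]
    have h2 : S N ≤ S (n+1) := by
      apply Finset.sum_le_sum_of_subset_of_nonneg (Finset.range_subset_range.mpr (by omega))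
      intro i _ _
      exact (gOf_pos f _).le
    calc S (n+1) - S N = |S (n+1) - S N| := (abs_of_nonneg (by linarith)).symm
      _ = dist (S (n+1)) (S N) := (Real.dist_eq _ _).symm
      _ < 1 := h1
  -- lower bound each term
  have hmonoa : ∀ i j : ℕ, i ≤ j → a i ≤ a j := by
    intro i j hij
    exact (Nat.nth_le_nth hA).mpr hij
  have hlow : ∀ i ∈ Finset.Ico N (n+1), 1 / ((cnt f (a n) : ℝ) + 1) ≤ gOf f (a i) := by
    intro i hi
    simp only [Finset.mem_Ico] at hi
    unfold gOf
    apply one_div_le_one_div_of_le (by positivity)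
    have : cnt f (a i) ≤ cnt f (a n) := cnt_mono f (hmonoa i n (by omega))
    exact_mod_cast Nat.cast_le.mpr (Nat.add_le_add_right this 1)
  have hcard := Finset.card_nsmul_le_sum (Finset.Ico N (n+1)) (fun i => gOf f (a i))
      (1 / ((cnt f (a n) : ℝ) + 1)) hlow
  rw [Nat.card_Ico] at hcard
  have hcount : ((n + 1 - N : ℕ) : ℝ) * (1 / ((cnt f (a n) : ℝ) + 1)) < 1 := by
    calc ((n + 1 - N : ℕ) : ℝ) * (1 / ((cnt f (a n) : ℝ) + 1))
        = (n + 1 - N : ℕ) • (1 / ((cnt f (a n) : ℝ) + 1)) := (nsmul_eq_mul _ _).symm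
      _ ≤ ∑ i ∈ Finset.Ico N (n+1), gOf f (a i) := hcard
      _ < 1 := hsum
  have hkk : (n + 1 - N : ℕ) = k + 1 := by omega
  rw [hkk] at hcount
  have hpos : (0:ℝ) < (cnt f (a n) : ℝ) + 1 := by positivity
  rw [mul_one_div, div_lt_one hpos] at hcount
  have hcnt : k < cnt f (a n) := by
    push_cast at hcount
    exact_mod_cast (by linarith : ((k:ℝ)) < (cnt f (a n) : ℝ))
  by_contra hcon
  push_neg at hcon
  have := cnt_le_of_lt f hcon
  omega

lemma rapid_meets (U : Ultrafilter ℕ) (hr : Rapid U) (g : ℕ → ℝ)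
    (hpos : ∀ n, 0 < g n) (h0 : Tendsto g atTop (nhds 0)) :
    ∃ A ∈ U, Summable (A.indicator g) := by
  have hev : ∀ k : ℕ, ∃ N : ℕ, ∀ m ≥ N, g m < (1/2 : ℝ)^k := by
    intro k
    have : ∀ᶠ m in atTop, g m < (1/2 : ℝ)^k :=
      h0.eventually_lt_const (by positivity)
    exact eventually_atTop.mp this
  choose T hT using hev
  obtain ⟨A, hAU, hAinf, hnth⟩ := hr T
  refine ⟨A, hAU, ?_⟩
  rw [summable_indicator_iff_nth g A hAinf]
  set a : ℕ → ℕ := Nat.nth (· ∈ A) with ha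
  obtain ⟨N₀, hN₀⟩ := eventually_atTop.mp hnth
  apply (summable_nat_add_iff (f := fun k => g (a k)) N₀).mp
  apply Summable.of_nonneg_of_le (fun n => (hpos _).le) (fun n => ?_)
    (summable_geometric_two.mul_right ((1/2:ℝ)^N₀) |>.congr (fun n => by rw [← pow_add]))
  have h1 : T (n + N₀) ≤ a (n + N₀) := hN₀ (n + N₀) (by omega)
  have h2 : g (a (n + N₀)) < (1/2:ℝ)^(n + N₀) := hT (n + N₀) _ h1
  exact h2.le

noncomputable def grf (r : ℝ) : ℕ → ℝ := fun n => ((n:ℝ) + 1) ^ (-r)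

lemma summable_one_add_rpow {q : ℝ} (hq : 1 < q) :
    Summable (fun k : ℕ => ((k:ℝ) + 1) ^ (-q)) := by
  have h1 : Summable (fun n : ℕ => ((n:ℝ) ^ q)⁻¹) := Real.summable_nat_rpow_inv.mpr hq
  have h2 := (summable_nat_add_iff (f := fun n : ℕ => ((n:ℝ) ^ q)⁻¹) 1).mpr h1
  apply h2.congr
  intro k
  rw [Real.rpow_neg (by positivity)]
  push_cast
  ring_nf

lemma grf_tall {r : ℝ} (hr : r ∈ Ioo (0:ℝ) 1) : SummableTall (grf r) := by
  obtain ⟨hr0, hr1⟩ := hr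
  refine ⟨fun n => Real.rpow_pos_of_pos (by positivity) _, ?_, ?_⟩
  · intro hs
    apply not_summable_harmonic1
    apply Summable.of_nonneg_of_le (fun m => by positivity) (fun n => ?_) hs
    unfold grf
    rw [Real.rpow_neg (by positivity), one_div]
    apply inv_anti₀ (by positivity)
    calc ((n:ℝ)+1) ^ r ≤ ((n:ℝ)+1) ^ (1:ℝ) :=
          Real.rpow_le_rpow_of_exponent_le (by push_cast; linarith) hr1.le
      _ = (n:ℝ)+1 := Real.rpow_one _
  · have h1 : Tendsto (fun x : ℝ => x ^ (-r)) atTop (nhds 0) := tendsto_rpow_neg_atTop hr0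
    have h2 : Tendsto (fun n : ℕ => (n:ℝ) + 1) atTop atTop :=
      tendsto_atTop_add_const_right _ 1 tendsto_natCast_atTop_atTop
    exact h1.comp h2

noncomputable def mseq (r : ℝ) : ℕ → ℕ := fun k => ⌊((k:ℝ) + 1) ^ r⁻¹⌋₊

lemma rpow_succ_ge {x s : ℝ} (hx : 1 ≤ x) (hs : 1 ≤ s) : x ^ s + 1 ≤ (x + 1) ^ s := by
  have hx0 : (0:ℝ) < x := by linarith
  have hx1 : (0:ℝ) < x + 1 := by linarith
  have e1 : (x + 1) ^ s = (x + 1) * (x + 1) ^ (s - 1) := by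
    have h := Real.rpow_add hx1 1 (s - 1)
    rw [Real.rpow_one] at h
    rw [show (1 + (s - 1)) = s by ring] at h
    exact h
  have e2 : x ^ s = x * x ^ (s - 1) := by
    have h := Real.rpow_add hx0 1 (s - 1)
    rw [Real.rpow_one] at h
    rw [show (1 + (s - 1)) = s by ring] at h
    exact h
  have h3 : x ^ (s - 1) ≤ (x + 1) ^ (s - 1) :=
    Real.rpow_le_rpow hx0.le (by linarith) (by linarith)
  have h4 : (1:ℝ) ≤ x ^ (s - 1) := Real.one_le_rpow hx (by linarith)
  calc x ^ s + 1 = x * x ^ (s - 1) + 1 := by rw [e2]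
    _ ≤ x * x ^ (s - 1) + x ^ (s - 1) := by linarith
    _ = (x + 1) * x ^ (s - 1) := by ring
    _ ≤ (x + 1) * (x + 1) ^ (s - 1) := by nlinarith [Real.rpow_nonneg hx0.le (s-1)]
    _ = (x + 1) ^ s := by rw [e1]

lemma mseq_strictMono {r : ℝ} (hr : r ∈ Ioo (0:ℝ) 1) : StrictMono (mseq r) := by
  obtain ⟨hr0, hr1⟩ := hr
  have hs : 1 < r⁻¹ := one_lt_inv_iff₀.mpr ⟨hr0, hr1⟩
  apply strictMono_nat_of_lt_succ
  intro k
  unfold mseq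
  have hx : (1:ℝ) ≤ (k:ℝ) + 1 := by push_cast; linarith [Nat.cast_nonneg (α := ℝ) k]
  have h1 : ((k:ℝ) + 1) ^ r⁻¹ + 1 ≤ (((k+1:ℕ):ℝ) + 1) ^ r⁻¹ := by
    push_cast
    have := rpow_succ_ge (x := (k:ℝ)+1) (s := r⁻¹) hx hs.le
    convert this using 2 <;> ring
  have h2 : ⌊((k:ℝ) + 1) ^ r⁻¹ + 1⌋₊ ≤ ⌊(((k+1:ℕ):ℝ) + 1) ^ r⁻¹⌋₊ := Nat.floor_mono h1
  rw [Nat.floor_add_one (Real.rpow_nonneg (by positivity) _)] at h2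
  omega

lemma mseq_bounds {r : ℝ} (hr : r ∈ Ioo (0:ℝ) 1) (k : ℕ) :
    ((k:ℝ) + 1) ^ r⁻¹ < (mseq r k : ℝ) + 1 ∧
    (mseq r k : ℝ) + 1 ≤ 2 * ((k:ℝ) + 1) ^ r⁻¹ := by
  have hc1 : (1:ℝ) ≤ ((k:ℝ) + 1) ^ r⁻¹ :=
    Real.one_le_rpow (by linarith [Nat.cast_nonneg (α := ℝ) k]) (inv_pos.mpr hr.1).le
  constructor
  · exact Nat.lt_floor_add_one _
  · have := Nat.floor_le (le_trans zero_le_one hc1)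
    unfold mseq
    linarith

lemma sep_diverge {r : ℝ} (hr : r ∈ Ioo (0:ℝ) 1) :
    ¬ Summable (fun k => grf r (mseq r k)) := by
  obtain ⟨hr0, hr1⟩ := hr
  intro hs
  apply not_summable_harmonic1
  have : Summable (fun k : ℕ => (1/2:ℝ) * (1 / ((k:ℝ) + 1))) := by
    apply Summable.of_nonneg_of_le (fun m => by positivity) (fun k => ?_) hs
    unfold grf
    obtain ⟨hb1, hb2⟩ := mseq_bounds ⟨hr0, hr1⟩ k
    have hck : (0:ℝ) < ((k:ℝ) + 1) ^ r⁻¹ := Real.rpow_pos_of_pos (by positivity) _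
    have key : (2 * ((k:ℝ) + 1) ^ r⁻¹) ^ (-r) ≤ ((mseq r k : ℝ) + 1) ^ (-r) := by
      rw [Real.rpow_neg (by positivity), Real.rpow_neg (by positivity)]
      apply inv_anti₀ (Real.rpow_pos_of_pos (by positivity) _)
      exact Real.rpow_le_rpow (by positivity) hb2 hr0.le
    refine le_trans ?_ key
    rw [Real.mul_rpow (by norm_num) hck.le]
    have e3 : (((k:ℝ) + 1) ^ r⁻¹) ^ (-r) = ((k:ℝ) + 1)⁻¹ := by
      rw [← Real.rpow_mul (by positivity : (0:ℝ) ≤ (k:ℝ) + 1)]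
      rw [show r⁻¹ * -r = -1 by rw [mul_neg, inv_mul_cancel₀ hr0.ne']]
      exact Real.rpow_neg_one _
    have e4 : (1/2:ℝ) ≤ (2:ℝ) ^ (-r) := by
      rw [Real.rpow_neg (by norm_num), one_div]
      apply inv_anti₀ (Real.rpow_pos_of_pos two_pos r)
      calc (2:ℝ) ^ r ≤ (2:ℝ) ^ (1:ℝ) := Real.rpow_le_rpow_of_exponent_le one_le_two hr1.le
        _ = 2 := Real.rpow_one 2
    rw [e3, one_div ((k:ℝ)+1)]
    exact mul_le_mul_of_nonneg_right e4 (by positivity)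
  have h2 := this.mul_left 2
  apply h2.congr
  intro k
  ring

lemma sep_converge {r r' : ℝ} (hr : r ∈ Ioo (0:ℝ) 1) (hr' : r' ∈ Ioo (0:ℝ) 1) (hlt : r < r') :
    Summable (fun k => grf r' (mseq r k)) := by
  obtain ⟨hr0, hr1⟩ := hr
  obtain ⟨hr'0, hr'1⟩ := hr'
  have hq : 1 < r⁻¹ * r' := by
    have h1 : r⁻¹ * r = 1 := inv_mul_cancel₀ hr0.ne'
    nlinarith [inv_pos.mpr hr0]
  apply Summable.of_nonneg_of_le
      (fun k => (Real.rpow_pos_of_pos (by positivity) _).le) (fun k => ?_)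
      (summable_one_add_rpow hq)
  obtain ⟨hb1, _⟩ := mseq_bounds ⟨hr0, hr1⟩ k
  have hck : (0:ℝ) < ((k:ℝ) + 1) ^ r⁻¹ := Real.rpow_pos_of_pos (by positivity) _
  calc ((mseq r k : ℝ) + 1) ^ (-r')
      ≤ (((k:ℝ) + 1) ^ r⁻¹) ^ (-r') := by
        rw [Real.rpow_neg (by positivity), Real.rpow_neg hck.le]
        exact inv_anti₀ (Real.rpow_pos_of_pos hck _) (Real.rpow_le_rpow hck.le hb1.le hr'0.le)
    _ = ((k:ℝ) + 1) ^ (-(r⁻¹ * r')) := by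
        rw [← Real.rpow_mul (by positivity : (0:ℝ) ≤ (k:ℝ) + 1), mul_neg]

lemma Ig_ne {r r' : ℝ} (hr : r ∈ Ioo (0:ℝ) 1) (hr' : r' ∈ Ioo (0:ℝ) 1) (hlt : r < r') :
    Ig (grf r) ≠ Ig (grf r') := by
  intro heq
  have hinj : Function.Injective (mseq r) := (mseq_strictMono hr).injective
  have hmem : Set.range (mseq r) ∈ Ig (grf r') := by
    simp only [Ig, Set.mem_setOf_eq]
    exact (summable_indicator_range_iff _ _ hinj).mpr (sep_converge hr hr' hlt)
  rw [← heq] at hmem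
  simp only [Ig, Set.mem_setOf_eq] at hmem
  exact sep_diverge hr ((summable_indicator_range_iff _ _ hinj).mp hmem)

def DomSet : Set Cardinal :=
  {c | ∃ F : Set (ℕ → ℕ), Cardinal.mk ↥F = c ∧
    ∀ g : ℕ → ℕ, ∃ f ∈ F, ∀ᶠ n in atTop, g n ≤ f n}

lemma DomSet_nonempty : DomSet.Nonempty := by
  refine ⟨Cardinal.mk ↥(Set.univ : Set (ℕ → ℕ)), Set.univ, rfl, fun g => ⟨g, Set.mem_univ g, ?_⟩⟩
  exact Eventually.of_forall fun n => le_rfl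

lemma domNum_mem : domNum ∈ DomSet := csInf_mem DomSet_nonempty

lemma aleph0_le_domNum : Cardinal.aleph0 ≤ domNum := by
  apply le_csInf DomSet_nonempty
  rintro c ⟨F, hFc, hFd⟩
  by_contra hc
  push_neg at hc
  rw [← hFc] at hc
  have hfin : F.Finite := Cardinal.lt_aleph0_iff_set_finite.mp hc
  obtain ⟨f, hfF, hev⟩ := hFd (fun n => (∑ u ∈ hfin.toFinset, u n) + 1)
  obtain ⟨n, hn⟩ := hev.exists
  have h1 : f n ≤ ∑ u ∈ hfin.toFinset, u n :=
    Finset.single_le_sum (f := fun u : ℕ → ℕ => u n) (fun i _ => Nat.zero_le _)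
      (hfin.mem_toFinset.mpr hfF)
  exact Nat.not_succ_le_self _ (hn.trans h1)

lemma domNum_le_continuum : domNum ≤ Cardinal.continuum := by
  apply csInf_le (OrderBot.bddBelow _)
  refine ⟨Set.univ, ?_, fun g => ⟨g, Set.mem_univ g, Eventually.of_forall fun n => le_rfl⟩⟩
  rw [Cardinal.mk_univ, Cardinal.mk_arrow]
  simp [Cardinal.aleph0_power_aleph0]

lemma exists_S : ∃ S : Set ℝ, S ⊆ Ioo (0:ℝ) 1 ∧ Cardinal.mk ↥S = domNum := by
  have h1 : domNum ≤ Cardinal.mk ↥(Ioo (0:ℝ) 1) := by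
    rw [Cardinal.mk_Ioo_real zero_lt_one]
    exact domNum_le_continuum
  obtain ⟨S', hS'⟩ := Cardinal.le_mk_iff_exists_set.mp h1
  refine ⟨Subtype.val '' S', ?_, ?_⟩
  · rintro x ⟨y, _, rfl⟩
    exact y.2
  · rw [Cardinal.mk_image_eq Subtype.val_injective, hS']


end AtmostD

open AtmostD
theorem atmostD :
    ∃ D : Set (Set (Set ℕ)),
      (∀ I ∈ D, ∃ g : ℕ → ℝ, SummableTall g ∧ I = Ig g) ∧
      Cardinal.mk ↥D = domNum ∧
      ∀ U : Ultrafilter ℕ, (↑U : Filter ℕ) ≤ Filter.cofinite →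
        (Rapid U ↔ ∀ I ∈ D, ∃ A ∈ U, A ∈ I) := by
  obtain ⟨F, hFc, hFd⟩ := domNum_mem
  obtain ⟨S, hSsub, hSc⟩ := exists_S
  set D1 : Set (Set (Set ℕ)) := (fun f => Ig (gOf f)) '' F with hD1
  set D2 : Set (Set (Set ℕ)) := (fun r => Ig (grf r)) '' S with hD2
  have hD2card : Cardinal.mk ↥D2 = domNum := by
    rw [hD2, Cardinal.mk_image_eq_of_injOn _ _ ?_, hSc]
    intro r hr r' hr' heq
    by_contra hne
    rcases Ne.lt_or_gt hne with h | h
    · exact Ig_ne (hSsub hr) (hSsub hr') h heq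
    · exact Ig_ne (hSsub hr') (hSsub hr) h heq.symm
  refine ⟨D1 ∪ D2, ?_, ?_, ?_⟩
  · rintro I (⟨f, hf, rfl⟩ | ⟨r, hr, rfl⟩)
    · exact ⟨gOf f, gOf_tall f, rfl⟩
    · exact ⟨grf r, grf_tall (hSsub hr), rfl⟩
  · apply le_antisymm
    · have h1 : Cardinal.mk ↥D1 ≤ domNum := (Cardinal.mk_image_le).trans_eq hFc
      calc Cardinal.mk ↥(D1 ∪ D2) ≤ Cardinal.mk ↥D1 + Cardinal.mk ↥D2 :=
            Cardinal.mk_union_le _ _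
        _ ≤ domNum + domNum := add_le_add h1 hD2card.le
        _ = domNum := Cardinal.add_eq_self aleph0_le_domNum
    · rw [← hD2card]
      exact Cardinal.mk_le_mk_of_subset subset_union_right
  · intro U hU
    constructor
    · rintro hrapid I (⟨f, hf, rfl⟩ | ⟨r, hr, rfl⟩)
      · obtain ⟨A, hAU, hsum⟩ :=
          rapid_meets U hrapid (gOf f) (gOf_tall f).1 (gOf_tall f).2.2
        exact ⟨A, hAU, hsum⟩
      · obtain ⟨A, hAU, hsum⟩ :=
          rapid_meets U hrapid (grf r) (grf_tall (hSsub hr)).1 (grf_tall (hSsub hr)).2.2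
        exact ⟨A, hAU, hsum⟩
    · intro hmeet x
      obtain ⟨f, hfF, hev⟩ := hFd (fun k => (Finset.range (2*k+1)).sup x)
      have hI : Ig (gOf f) ∈ D1 ∪ D2 := Or.inl (Set.mem_image_of_mem _ hfF)
      obtain ⟨A, hAU, hAI⟩ := hmeet _ hI
      have hAinf : A.Infinite := mem_ultrafilter_infinite U hU hAU
      obtain ⟨N, hN⟩ := key f A hAinf hAI
      obtain ⟨K, hK⟩ := eventually_atTop.mp hev
      refine ⟨A, hAU, hAinf, ?_⟩
      rw [eventually_atTop]
      refine ⟨2*N + K + N, fun n hn => ?_⟩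
      have hk1 : K ≤ n - N := by omega
      have hk2 : n ≤ 2*(n - N) := by omega
      calc x n ≤ (Finset.range (2*(n-N)+1)).sup x :=
            Finset.le_sup (Finset.mem_range.mpr (by omega))
        _ ≤ f (n - N) := hK _ hk1
        _ ≤ fhat f (n - N) := le_fhat f _
        _ ≤ Nat.nth (· ∈ A) ((n - N) + N) := hN (n - N)
        _ = Nat.nth (· ∈ A) n := by rw [show (n - N) + N = n by omega]
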